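/- Let X and Γ be connected, bounded-valence graphs, suppose X is quasi-transitive, and suppose X and Γ are quasi-isometric. Then for every n > 0 there exists m > 0 such that every tight element b ∈ 𝓑Γ with |δb| < n satisfies: the set of endpoints of the edges of δb has diameter less than m in Γ. -/

import Mathlib

open SimpleGraph

namespace Paper

variable {V W : Type*}

/-- Locally finite graph: every vertex has finite degree. -/
def LocFin (G : SimpleGraph V) : Prop := ∀ v : V, (G.neighborSet v).Finite

/-- All vertex degrees are at most `d`. -/
def DegLe (G : SimpleGraph V) (d : ℕ) : Prop :=
  ∀ v : V, (G.neighborSet v).Finite ∧ (G.neighborSet v).ncard ≤ d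

/-- Bounded valence. -/
def BddVal (G : SimpleGraph V) : Prop := ∃ d : ℕ, DegLe G d

/-- `(l, e)`-quasi-isometric embedding between the vertex sets of two graphs. -/
def IsQIE (G : SimpleGraph V) (H : SimpleGraph W) (l e : ℝ) (f : V → W) : Prop :=
  ∀ x y : V,
    (G.dist x y : ℝ) / l - e ≤ (H.dist (f x) (f y) : ℝ) ∧
      (H.dist (f x) (f y) : ℝ) ≤ l * (G.dist x y : ℝ) + e

/-- Coarse surjectivity: every vertex of the target lies within distance `e` of the image. -/
def CoarseSurj (H : SimpleGraph W) (e : ℝ) (f : V → W) : Prop :=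
  ∀ w : W, ∃ x : V, (H.dist w (f x) : ℝ) ≤ e

/-- `(l, e)`-quasi-isometry. -/
def IsQI (G : SimpleGraph V) (H : SimpleGraph W) (l e : ℝ) (f : V → W) : Prop :=
  IsQIE G H l e f ∧ CoarseSurj H e f

/-- `g` is an `h`-quasi-inverse of `f`. -/
def IsQInv (G : SimpleGraph V) (h : ℝ) (f : V → W) (g : W → V) : Prop :=
  ∀ x : V, (G.dist (g (f x)) x : ℝ) ≤ h

/-- Reachability by a walk all of whose vertices avoid the set `S`. -/
def ReachOut (G : SimpleGraph V) (S : Set V) (a b : V) : Prop :=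
  ∃ w : G.Walk a b, ∀ v ∈ w.support, v ∉ S

/-- A one-way infinite simple ray. -/
def RayIn (G : SimpleGraph V) (r : ℕ → V) : Prop :=
  Function.Injective r ∧ ∀ n : ℕ, G.Adj (r n) (r (n + 1))

/-- End-equivalence of rays: for every finite vertex set they have tails in the same
connected component of the graph with that set deleted. -/
def EndEquiv (G : SimpleGraph V) (r₁ r₂ : ℕ → V) : Prop :=
  ∀ S : Set V, S.Finite → ∃ N : ℕ, ∀ m n : ℕ, N ≤ m → N ≤ n → ReachOut G S (r₁ m) (r₂ n)

/-- Two points (encoded as sequences: a constant sequence for a vertex, a ray for an end)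
lie in distinct connected components of `G` with the vertex set `S` deleted. -/
def SepComps (G : SimpleGraph V) (S : Set V) (a b : ℕ → V) : Prop :=
  ∃ N : ℕ,
    (∀ m n : ℕ, N ≤ m → N ≤ n → ReachOut G S (a m) (a n)) ∧
    (∀ m n : ℕ, N ≤ m → N ≤ n → ReachOut G S (b m) (b n)) ∧
    (∀ m n : ℕ, N ≤ m → N ≤ n → ¬ ReachOut G S (a m) (b n))

/-- `vs(G) ≥ N`: any vertex set separating two ends has at least `N` elements. -/
def VsGe (G : SimpleGraph V) (N : ℕ) : Prop :=
  ∀ r₁ r₂ : ℕ → V, RayIn G r₁ → RayIn G r₂ →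
    ∀ S : Set V, S.Finite → SepComps G S r₁ r₂ → N ≤ S.ncard

/-- `vs(G) ≥ c` for a real threshold `c`. -/
def VsGeR (G : SimpleGraph V) (c : ℝ) : Prop :=
  ∀ r₁ r₂ : ℕ → V, RayIn G r₁ → RayIn G r₂ →
    ∀ S : Set V, S.Finite → SepComps G S r₁ r₂ → c ≤ (S.ncard : ℝ)

/-- `U` is a connected component of `G` with the vertex set `A` deleted. -/
def IsCompOut (G : SimpleGraph V) (A U : Set V) : Prop :=
  ∃ a ∈ U, ∀ b : V, ReachOut G A a b ↔ b ∈ U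

/-- The edge coboundary `δb` of a vertex set `b`. -/
def cob (G : SimpleGraph V) (b : Set V) : Set (Sym2 V) :=
  {e | ∃ x y : V, e = s(x, y) ∧ G.Adj x y ∧ x ∈ b ∧ y ∉ b}

/-- Membership in the Boolean ring `𝓑G` of vertex sets with finite coboundary. -/
def MemBX (G : SimpleGraph V) (b : Set V) : Prop := (cob G b).Finite

/-- The set of endpoints of the edges of `δb`. -/
def cobVerts (G : SimpleGraph V) (b : Set V) : Set V :=
  {v | ∃ w : V, s(v, w) ∈ cob G b}

/-- A tight element: both sides induce connected subgraphs. -/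
def Tight (G : SimpleGraph V) (b : Set V) : Prop :=
  (G.induce b).Connected ∧ (G.induce bᶜ).Connected

/-- Vertices of `A` that are endpoints of an edge with the other endpoint in `U`. -/
def AttachSet (G : SimpleGraph V) (A U : Set V) : Set V :=
  {v | v ∈ A ∧ ∃ u ∈ U, G.Adj v u}

/-- `incut(A) ≤ k` for a vertex set `A`, with the intrinsic metric of `G.induce A`. -/
def IncutBddSet (G : SimpleGraph V) (A : Set V) (k : ℕ) : Prop :=
  ∀ U : Set V, IsCompOut G A U →
    ∀ v w : A, (v : V) ∈ AttachSet G A U → (w : V) ∈ AttachSet G A U →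
      (G.induce A).dist v w ≤ k

/-- `outcut(A) ≤ k` for a vertex set `A`. -/
def OutcutBddSet (G : SimpleGraph V) (A : Set V) (k : ℕ) : Prop :=
  ∀ U : Set V, IsCompOut G A U → IncutBddSet G U k

/-- Uniform coboundary for a vertex set. -/
def UnifCobSet (G : SimpleGraph V) (A : Set V) : Prop :=
  (∃ k : ℕ, IncutBddSet G A k) ∧ (∃ k : ℕ, OutcutBddSet G A k)

/-- `incut(L) ≤ k` for a subgraph `L`, with its own intrinsic metric. -/
def IncutBddSub (G : SimpleGraph V) (L : G.Subgraph) (k : ℕ) : Prop :=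
  ∀ U : Set V, IsCompOut G L.verts U →
    ∀ v w : L.verts, (v : V) ∈ AttachSet G L.verts U → (w : V) ∈ AttachSet G L.verts U →
      L.coe.dist v w ≤ k

/-- `outcut(L) ≤ k` for a subgraph `L`. -/
def OutcutBddSub (G : SimpleGraph V) (L : G.Subgraph) (k : ℕ) : Prop :=
  ∀ U : Set V, IsCompOut G L.verts U → IncutBddSet G U k

/-- Uniform coboundary for a subgraph. -/
def UnifCobSub (G : SimpleGraph V) (L : G.Subgraph) : Prop :=
  (∃ k : ℕ, IncutBddSub G L k) ∧ (∃ k : ℕ, OutcutBddSub G L k)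

/-- Quasi-transitive graph: the automorphism group has finitely many orbits of vertices. -/
def QuasiTransitive (G : SimpleGraph V) : Prop :=
  ∃ F : Set V, F.Finite ∧ ∀ v : V, ∃ e : G ≃g G, ∃ w ∈ F, e w = v

/-- Hausdorff distance between two vertex sets is at most `r`. -/
def HausBdd (G : SimpleGraph V) (A B : Set V) (r : ℝ) : Prop :=
  (∀ a ∈ A, ∃ b ∈ B, (G.dist a b : ℝ) ≤ r) ∧ (∀ b ∈ B, ∃ a ∈ A, (G.dist a b : ℝ) ≤ r)

/-- Reachability by a walk avoiding the edge set `F`. -/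
def ReachAvoidE (G : SimpleGraph V) (F : Set (Sym2 V)) (a b : V) : Prop :=
  ∃ w : G.Walk a b, ∀ e ∈ w.edges, e ∉ F

/-- The ends of the rays `r₁`, `r₂` are separated by deleting the edge set `F`. -/
def SepEnds (G : SimpleGraph V) (F : Set (Sym2 V)) (r₁ r₂ : ℕ → V) : Prop :=
  ∃ N : ℕ, ∀ m n : ℕ, N ≤ m → N ≤ n → ¬ ReachAvoidE G F (r₁ m) (r₂ n)

/-- Accessibility: some `k ≥ 1` such that any two distinct ends can be separated by
deleting at most `k` edges. -/
def Accessible (G : SimpleGraph V) : Prop :=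
  ∃ k : ℕ, 1 ≤ k ∧ ∀ r₁ r₂ : ℕ → V, RayIn G r₁ → RayIn G r₂ → ¬ EndEquiv G r₁ r₂ →
    ∃ F : Set (Sym2 V), F.Finite ∧ F.ncard ≤ k ∧ SepEnds G F r₁ r₂

/-- `l`-quasi-action of a group on the vertex set of a graph. -/
def IsQAct {G₀ : Type*} [Group G₀] (G : SimpleGraph V) (l : ℝ) (φ : G₀ → V → V) : Prop :=
  (∀ g : G₀, IsQI G G l l (φ g)) ∧
  (∀ (g h : G₀) (x : V), (G.dist (φ (g * h) x) (φ g (φ h x)) : ℝ) ≤ l) ∧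
  (∀ g : G₀, IsQInv G l (φ g) (φ g⁻¹) ∧ IsQInv G l (φ g⁻¹) (φ g))

/-- `B`-cobounded quasi-action. -/
def Cobdd {G₀ : Type*} [Group G₀] (G : SimpleGraph V) (B : ℝ) (φ : G₀ → V → V) : Prop :=
  ∀ x y : V, ∃ g : G₀, (G.dist x (φ g y) : ℝ) ≤ B

/-- The diameter (in `ℕ`) of a vertex set. -/
noncomputable def setDiam (G : SimpleGraph V) (S : Set V) : ℕ :=
  sSup {d : ℕ | ∃ x ∈ S, ∃ y ∈ S, G.dist x y = d}

/-- 2-connected: connected, at least three vertices, and deleting any single vertex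
leaves it connected. -/
def TwoConnected (G : SimpleGraph V) : Prop :=
  G.Connected ∧ (∃ a b c : V, a ≠ b ∧ a ≠ c ∧ b ≠ c) ∧
    ∀ v : V, (G.induce {w : V | w ≠ v}).Connected

/-- Tree decomposition. -/
def IsTreeDecomp {VT : Type*} (X : SimpleGraph V) (T : SimpleGraph VT) (B : VT → Set V) :
    Prop :=
  T.IsTree ∧ (∀ x : V, ∃ u : VT, x ∈ B u) ∧
    ∀ u v w : VT, (∃ p : T.Walk u w, p.IsPath ∧ v ∈ p.support) → B u ∩ B w ⊆ B v

/-- Bounded adhesion. -/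
def BddAdhesion {VT : Type*} (T : SimpleGraph VT) (B : VT → Set V) : Prop :=
  ∃ N : ℕ, ∀ u w : VT, T.Adj u w → (B u ∩ B w).Finite ∧ (B u ∩ B w).ncard ≤ N

/-- Connected parts. -/
def ConnParts {VT : Type*} (X : SimpleGraph V) (B : VT → Set V) : Prop :=
  ∀ u : VT, (X.induce (B u)).Connected

/-- Replacing each bag by its closed `r`-neighbourhood. -/
def ballBag {VT : Type*} (X : SimpleGraph V) (B : VT → Set V) (r : ℕ) : VT → Set V :=
  fun u => {x : V | ∃ y ∈ B u, X.dist x y ≤ r}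

/-- A point of `G` which is either a vertex lying outside `B(S;R)` (encoded as a constant
sequence) or an end (encoded as a ray representing it). -/
def PtSeq (G : SimpleGraph V) (S : Set V) (R : ℝ) (a : ℕ → V) : Prop :=
  (∃ v : V, a = Function.const ℕ v ∧ ∀ s ∈ S, R < (G.dist v s : ℝ)) ∨ RayIn G a

/-- A subring of `𝓑G`: contains `∅`, and is closed under intersection and
symmetric difference. -/
def IsSubring (G : SimpleGraph V) (R : Set (Set V)) : Prop :=
  (∀ b ∈ R, MemBX G b) ∧ ∅ ∈ R ∧
    (∀ a ∈ R, ∀ b ∈ R, a ∩ b ∈ R) ∧ (∀ a ∈ R, ∀ b ∈ R, symmDiff a b ∈ R)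

/-- The subring generated by a family. -/
def genSubring (G : SimpleGraph V) (E : Set (Set V)) : Set (Set V) :=
  ⋂₀ {R : Set (Set V) | IsSubring G R ∧ E ⊆ R}

/-- Two vertex sets are nested. -/
def Nested (a b : Set V) : Prop :=
  a ∩ b = ∅ ∨ a ∩ bᶜ = ∅ ∨ aᶜ ∩ b = ∅ ∨ aᶜ ∩ bᶜ = ∅

/-- A nested family: closed under complementation and pairwise nested. -/
def NestedFam (E : Set (Set V)) : Prop :=
  (∀ b ∈ E, bᶜ ∈ E) ∧ ∀ a ∈ E, ∀ b ∈ E, Nested a b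

/-- A `G₀`-invariant family of vertex sets. -/
def GInvFam (G₀ : Type*) [Group G₀] [MulAction G₀ V] (E : Set (Set V)) : Prop :=
  ∀ g : G₀, ∀ b ∈ E, (fun x => g • x) '' b ∈ E

/-- A `G₀`-finite family of vertex sets: it meets only finitely many orbits. -/
def GFinFam (G₀ : Type*) [Group G₀] [MulAction G₀ V] (E : Set (Set V)) : Prop :=
  ∃ F : Set (Set V), F.Finite ∧ F ⊆ E ∧
    ∀ b ∈ E, ∃ g : G₀, ∃ c ∈ F, (fun x => g • x) '' c = b

/-- `g` stabilises the subgraph `L` setwise. -/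
def StabSub {G₀ : Type*} [Group G₀] [MulAction G₀ V] (G : SimpleGraph V) (g : G₀)
    (L : G.Subgraph) : Prop :=
  (∀ v : V, v ∈ L.verts ↔ g • v ∈ L.verts) ∧
    (∀ a b : V, L.Adj a b ↔ L.Adj (g • a) (g • b))

end Paper


namespace Stmt9Aux
open SimpleGraph Paper

variable {V : Type*} {W : Type*}

/-- distance from start to any support vertex is at most the walk length -/
lemma dist_le_of_mem_support {G : SimpleGraph V} {u v : V} (w : G.Walk u v)
    {z : V} (hz : z ∈ w.support) : G.dist u z ≤ w.length := by
  classical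
  have h1 : G.dist u z ≤ (w.takeUntil z hz).length := SimpleGraph.dist_le _
  exact h1.trans (SimpleGraph.Walk.length_takeUntil_le w hz)

/-- crossing lemma: a walk from inside S to outside S contains a crossing edge -/
lemma exists_cross {G : SimpleGraph V} {S : Set V} :
    ∀ {u v : V} (w : G.Walk u v), u ∈ S → v ∉ S →
    ∃ x y, G.Adj x y ∧ x ∈ S ∧ y ∉ S ∧ x ∈ w.support ∧ y ∈ w.support := by
  intro u v w
  induction w with
  | nil => intro hu hv; exact absurd hu hv
  | @cons a b c h p ih =>
      intro hu hv
      by_cases hb : b ∈ S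
      · obtain ⟨x, y, h1, h2, h3, h4, h5⟩ := ih hb hv
        exact ⟨x, y, h1, h2, h3, by simp [SimpleGraph.Walk.support_cons, h4],
          by simp [SimpleGraph.Walk.support_cons, h5]⟩
      · exact ⟨a, b, h, hu, hb, by simp [SimpleGraph.Walk.support_cons],
          by simp [SimpleGraph.Walk.support_cons]⟩

lemma reachable_induce_of_walk {G : SimpleGraph V} {S : Set V} :
    ∀ {u v : V} (w : G.Walk u v) (h : ∀ z ∈ w.support, z ∈ S),
    (G.induce S).Reachable ⟨u, h u w.start_mem_support⟩ ⟨v, h v w.end_mem_support⟩ := by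
  intro u v w
  induction w with
  | nil => intro h; rfl
  | @cons a b c hadj p ih =>
      intro h
      have h1 : ∀ z ∈ p.support, z ∈ S := fun z hz => h z (by simp [SimpleGraph.Walk.support_cons, hz])
      have hr := ih h1
      have hadj' : (G.induce S).Adj ⟨a, h a (by simp [SimpleGraph.Walk.support_cons])⟩
          ⟨b, h1 b p.start_mem_support⟩ := hadj
      exact (hadj'.reachable).trans hr

lemma walk_of_induce {G : SimpleGraph V} {S : Set V} {a b : ↥S} (w : (G.induce S).Walk a b) :
    ∃ w' : G.Walk a.1 b.1, ∀ z ∈ w'.support, z ∈ S := by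
  refine ⟨w.map (SimpleGraph.Embedding.induce S).toHom, ?_⟩
  intro z hz
  have hz2 : z ∈ (w.map (SimpleGraph.Embedding.induce S).toHom).support := hz
  rw [SimpleGraph.Walk.support_map, List.mem_map] at hz2
  obtain ⟨⟨z', hz'⟩, _, rfl⟩ := hz2
  exact hz'

/-- if every point of S can be joined to a basepoint by a walk inside S, induced graph connected -/
lemma induce_connected {G : SimpleGraph V} {S : Set V} {x₀ : V} (hx₀ : x₀ ∈ S)
    (h : ∀ z ∈ S, ∃ w : G.Walk z x₀, ∀ y ∈ w.support, y ∈ S) :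
    (G.induce S).Connected := by
  rw [SimpleGraph.connected_iff]
  refine ⟨?_, ⟨⟨x₀, hx₀⟩⟩⟩
  rintro ⟨u, hu⟩ ⟨v, hv⟩
  obtain ⟨w1, h1⟩ := h u hu
  obtain ⟨w2, h2⟩ := h v hv
  exact (reachable_induce_of_walk (S := S) w1 h1).trans
    (reachable_induce_of_walk (S := S) w2 h2).symm

lemma ncard_biUnion_le {α β : Type*} {s : Set α} (hs : s.Finite) (f : α → Set β) (m : ℕ)
    (hf : ∀ a ∈ s, (f a).Finite ∧ (f a).ncard ≤ m) :
    (⋃ a ∈ s, f a).Finite ∧ (⋃ a ∈ s, f a).ncard ≤ s.ncard * m := by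
  classical
  refine Set.Finite.induction_on
    (motive := fun s _ => (∀ a ∈ s, (f a).Finite ∧ (f a).ncard ≤ m) →
      ((⋃ a ∈ s, f a).Finite ∧ (⋃ a ∈ s, f a).ncard ≤ s.ncard * m)) s hs (by simp) ?_ hf
  intro a s ha hs ih hf'
  have hfa := hf' a (Set.mem_insert _ _)
  obtain ⟨ihf, ihc⟩ := ih (fun b hb => hf' b (Set.mem_insert_of_mem _ hb))
  have hU : (⋃ b ∈ insert a s, f b) = f a ∪ ⋃ b ∈ s, f b := by
    simp [Set.biUnion_insert]
  rw [hU]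
  refine ⟨hfa.1.union ihf, ?_⟩
  calc (f a ∪ ⋃ b ∈ s, f b).ncard ≤ (f a).ncard + (⋃ b ∈ s, f b).ncard := Set.ncard_union_le _ _
    _ ≤ m + s.ncard * m := Nat.add_le_add hfa.2 ihc
    _ ≤ (insert a s).ncard * m := by
        rw [Set.ncard_insert_of_notMem ha hs]; ring_nf; omega


/-- closed ball -/
def nball (G : SimpleGraph V) (v : V) (t : ℕ) : Set V := {w | G.dist v w ≤ t}

lemma mem_nball {G : SimpleGraph V} {v w : V} {t : ℕ} : w ∈ nball G v t ↔ G.dist v w ≤ t :=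
  Iff.rfl

lemma nball_finite_card {G : SimpleGraph V} (hc : G.Connected) {d : ℕ}
    (hdeg : DegLe G d) (v : V) :
    ∀ t : ℕ, (nball G v t).Finite ∧ (nball G v t).ncard ≤ (d + 1) ^ t := by
  intro t
  induction t with
  | zero =>
      have h0 : nball G v 0 = {v} := by
        ext w
        simp only [mem_nball, Nat.le_zero, Set.mem_singleton_iff]
        constructor
        · intro h
          rcases SimpleGraph.dist_eq_zero_iff_eq_or_not_reachable.1 h with h | h
          · exact h.symm
          · exact absurd (hc.preconnected v w) h
        · rintro rfl; simp
      rw [h0]; simp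
  | succ t ih =>
      have hsub : nball G v (t+1) ⊆ nball G v t ∪ ⋃ u ∈ nball G v t, G.neighborSet u := by
        intro w hw
        rw [mem_nball] at hw
        by_cases h : G.dist v w ≤ t
        · exact Or.inl h
        · have hne : G.dist w v ≠ 0 := by
            rw [SimpleGraph.dist_comm]; omega
          obtain ⟨q, hq⟩ := SimpleGraph.exists_walk_of_dist_ne_zero hne
          cases q with
          | nil => simp at hne
          | @cons _ y _ hadj q' =>
              have hy : y ∈ nball G v t := by
                rw [mem_nball]
                have h1 : G.dist v y ≤ q'.reverse.length := SimpleGraph.dist_le _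
                rw [SimpleGraph.Walk.length_reverse] at h1
                have h2 : q'.length + 1 = G.dist w v := by simpa using hq
                rw [SimpleGraph.dist_comm] at h2
                omega
              exact Or.inr (Set.mem_biUnion hy hadj.symm)
      obtain ⟨ihf, ihc⟩ := ih
      have hb := ncard_biUnion_le ihf (fun u => G.neighborSet u) d
        (fun u _ => hdeg u)
      refine ⟨(ihf.union hb.1).subset hsub, ?_⟩
      calc (nball G v (t+1)).ncard ≤ (nball G v t ∪ ⋃ u ∈ nball G v t, G.neighborSet u).ncard :=
            Set.ncard_le_ncard hsub (ihf.union hb.1)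
        _ ≤ (nball G v t).ncard + (⋃ u ∈ nball G v t, G.neighborSet u).ncard :=
            Set.ncard_union_le _ _
        _ ≤ (d+1)^t + (d+1)^t * d := Nat.add_le_add ihc (hb.2.trans (Nat.mul_le_mul_right d ihc))
        _ = (d+1)^(t+1) := by ring

/-- natural-number quasi-isometry data -/
def NQI (X : SimpleGraph V) (Γ : SimpleGraph W) (L : ℕ) (ψ : V → W) : Prop :=
  1 ≤ L ∧
  (∀ x y : V, Γ.dist (ψ x) (ψ y) ≤ L * X.dist x y + L) ∧
  (∀ x y : V, X.dist x y ≤ L * Γ.dist (ψ x) (ψ y) + L) ∧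
  (∀ w : W, ∃ x : V, Γ.dist w (ψ x) ≤ L)

lemma nqi_of_isqi {X : SimpleGraph V} {Γ : SimpleGraph W} {l e : ℝ} {ψ : V → W}
    (hl : 1 ≤ l) (he : 0 ≤ e) (h : IsQI X Γ l e ψ) :
    ∃ L : ℕ, NQI X Γ L ψ := by
  refine ⟨⌈l⌉₊ * (⌈e⌉₊ + 1) + ⌈e⌉₊ + 1, ?_, ?_, ?_, ?_⟩
  · omega
  · intro x y
    have h1 := (h.1 x y).2
    have hll : l ≤ (⌈l⌉₊ : ℝ) := Nat.le_ceil l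
    have hee : e ≤ (⌈e⌉₊ : ℝ) := Nat.le_ceil e
    have hd : (0:ℝ) ≤ (X.dist x y : ℝ) := Nat.cast_nonneg _
    have : (Γ.dist (ψ x) (ψ y) : ℝ) ≤ ((⌈l⌉₊ * (⌈e⌉₊ + 1) + ⌈e⌉₊ + 1 : ℕ) : ℝ) * (X.dist x y : ℝ)
        + ((⌈l⌉₊ * (⌈e⌉₊ + 1) + ⌈e⌉₊ + 1 : ℕ) : ℝ) := by
      push_cast
      have hP1 : (0:ℝ) ≤ (⌈l⌉₊ : ℝ) := Nat.cast_nonneg _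
      have hP2 : (0:ℝ) ≤ (⌈e⌉₊ : ℝ) := Nat.cast_nonneg _
      linarith [mul_le_mul_of_nonneg_right hll hd, mul_nonneg hP2 hd,
        mul_nonneg (mul_nonneg hP1 hP2) hd, mul_nonneg hP1 hP2]
    exact_mod_cast this
  · intro x y
    have h1 := (h.1 x y).1
    have hl0 : (0:ℝ) < l := by linarith
    have h2 : (X.dist x y : ℝ) ≤ l * (Γ.dist (ψ x) (ψ y) : ℝ) + l * e := by
      have h3 : (X.dist x y : ℝ) / l ≤ (Γ.dist (ψ x) (ψ y) : ℝ) + e := by linarith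
      rw [div_le_iff₀ hl0] at h3
      nlinarith
    have hll : l ≤ (⌈l⌉₊ : ℝ) := Nat.le_ceil l
    have hee : e ≤ (⌈e⌉₊ : ℝ) := Nat.le_ceil e
    have : (X.dist x y : ℝ) ≤ ((⌈l⌉₊ * (⌈e⌉₊ + 1) + ⌈e⌉₊ + 1 : ℕ) : ℝ) * (Γ.dist (ψ x) (ψ y) : ℝ)
        + ((⌈l⌉₊ * (⌈e⌉₊ + 1) + ⌈e⌉₊ + 1 : ℕ) : ℝ) := by
      push_cast
      have hd : (0:ℝ) ≤ (Γ.dist (ψ x) (ψ y) : ℝ) := Nat.cast_nonneg _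
      have hP1 : (0:ℝ) ≤ (⌈l⌉₊ : ℝ) := Nat.cast_nonneg _
      have hP2 : (0:ℝ) ≤ (⌈e⌉₊ : ℝ) := Nat.cast_nonneg _
      have hle : l * e ≤ (⌈l⌉₊ : ℝ) * (⌈e⌉₊ : ℝ) := mul_le_mul hll hee he hP1
      linarith [mul_le_mul_of_nonneg_right hll hd, mul_nonneg hP2 hd,
        mul_nonneg (mul_nonneg hP1 hP2) hd, mul_nonneg hP1 hP2]
    exact_mod_cast this
  · intro w
    obtain ⟨x, hx⟩ := h.2 w
    refine ⟨x, ?_⟩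
    have hee : e ≤ (⌈e⌉₊ : ℝ) := Nat.le_ceil e
    have : (Γ.dist w (ψ x) : ℝ) ≤ ((⌈l⌉₊ * (⌈e⌉₊ + 1) + ⌈e⌉₊ + 1 : ℕ) : ℝ) := by
      push_cast
      have hP1 : (0:ℝ) ≤ (⌈l⌉₊ : ℝ) := Nat.cast_nonneg _
      have hP2 : (0:ℝ) ≤ (⌈e⌉₊ : ℝ) := Nat.cast_nonneg _
      linarith [mul_nonneg hP1 hP2]
    exact_mod_cast this

lemma iso_reachable {G : SimpleGraph V} (α : G ≃g G) {x y : V} (h : G.Reachable x y) :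
    G.Reachable (α x) (α y) := by
  obtain ⟨p⟩ := h
  exact ⟨p.map α.toHom⟩

lemma iso_dist_le {G : SimpleGraph V} (α : G ≃g G) (x y : V) :
    G.dist (α x) (α y) ≤ G.dist x y := by
  by_cases hr : G.Reachable x y
  · obtain ⟨p, hp⟩ := hr.exists_walk_length_eq_dist
    have := SimpleGraph.dist_le (p.map α.toHom)
    rwa [SimpleGraph.Walk.length_map, hp] at this
  · rw [SimpleGraph.dist_eq_zero_of_not_reachable hr]
    have hnr : ¬G.Reachable (α x) (α y) := fun hc =>
      hr (by simpa using iso_reachable α.symm hc)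
    rw [SimpleGraph.dist_eq_zero_of_not_reachable hnr]

lemma iso_dist {G : SimpleGraph V} (α : G ≃g G) (x y : V) :
    G.dist (α x) (α y) = G.dist x y := by
  refine le_antisymm (iso_dist_le α x y) ?_
  have := iso_dist_le α.symm (α x) (α y)
  simpa using this

/-! ### cob and cobVerts basics -/

lemma mem_cob_iff {G : SimpleGraph V} {b : Set V} {x y : V} :
    s(x, y) ∈ cob G b ↔ G.Adj x y ∧ ((x ∈ b ∧ y ∉ b) ∨ (y ∈ b ∧ x ∉ b)) := by
  constructor
  · rintro ⟨p, q, hpq, hadj, hp, hq⟩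
    rw [Sym2.eq_iff] at hpq
    rcases hpq with ⟨rfl, rfl⟩ | ⟨rfl, rfl⟩
    · exact ⟨hadj, Or.inl ⟨hp, hq⟩⟩
    · exact ⟨hadj.symm, Or.inr ⟨hp, hq⟩⟩
  · rintro ⟨hadj, ⟨hx, hy⟩ | ⟨hy, hx⟩⟩
    · exact ⟨x, y, rfl, hadj, hx, hy⟩
    · exact ⟨y, x, Sym2.eq_swap, hadj.symm, hy, hx⟩

lemma mem_cobVerts_iff {G : SimpleGraph V} {b : Set V} {v : V} :
    v ∈ cobVerts G b ↔ ∃ w, G.Adj v w ∧ ((v ∈ b ∧ w ∉ b) ∨ (w ∈ b ∧ v ∉ b)) := by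
  constructor
  · rintro ⟨w, hw⟩
    exact ⟨w, (mem_cob_iff.1 hw).1, (mem_cob_iff.1 hw).2⟩
  · rintro ⟨w, hadj, h⟩
    exact ⟨w, mem_cob_iff.2 ⟨hadj, h⟩⟩

lemma cobVerts_subset_biUnion {G : SimpleGraph V} {b : Set V} :
    cobVerts G b ⊆ ⋃ e ∈ cob G b, {x : V | x ∈ e} := by
  rintro v ⟨w, hw⟩
  exact Set.mem_biUnion hw (by simp [Sym2.mem_iff])

lemma cobVerts_card {G : SimpleGraph V} {b : Set V} (hb : (cob G b).Finite) :
    (cobVerts G b).Finite ∧ (cobVerts G b).ncard ≤ (cob G b).ncard * 2 := by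
  have hball : ∀ e ∈ cob G b, ({x : V | x ∈ e} : Set V).Finite ∧ ({x : V | x ∈ e} : Set V).ncard ≤ 2 := by
    intro e _
    induction e with
    | _ x y =>
        have h1 : ({z : V | z ∈ s(x,y)} : Set V) = {x, y} := by
          ext z; simp [Sym2.mem_iff]
        rw [h1]
        refine ⟨(Set.finite_singleton y).insert x, ?_⟩
        calc ({x, y} : Set V).ncard ≤ ({y} : Set V).ncard + 1 := Set.ncard_insert_le _ _
          _ ≤ 2 := by simp
  obtain ⟨h1, h2⟩ := ncard_biUnion_le hb (fun e => {x : V | x ∈ e}) 2 hball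
  exact ⟨h1.subset cobVerts_subset_biUnion,
    (Set.ncard_le_ncard cobVerts_subset_biUnion h1).trans h2⟩

/-! ### rigidity of tight cuts -/

lemma induce_no_split {G : SimpleGraph V} {S A : Set V} (hconn : (G.induce S).Connected)
    {p q : V} (hp : p ∈ S) (hq : q ∈ S) (hpA : p ∈ A) (hqA : q ∉ A) :
    ∃ x y, G.Adj x y ∧ x ∈ S ∧ y ∈ S ∧ x ∈ A ∧ y ∉ A := by
  obtain ⟨w⟩ := hconn.preconnected ⟨p, hp⟩ ⟨q, hq⟩
  obtain ⟨w', hw'⟩ := walk_of_induce w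
  obtain ⟨x, y, hadj, hx, hy, hxs, hys⟩ := exists_cross w' hpA hqA
  exact ⟨x, y, hadj, hw' x hxs, hw' y hys, hx, hy⟩

/-- A tight cut is determined by any cut whose coboundary is contained in its coboundary. -/
lemma rigid {G : SimpleGraph V} {c m : Set V}
    (hc1 : (G.induce c).Connected) (hc2 : (G.induce cᶜ).Connected)
    (hsub : cob G m ⊆ cob G c) {x0 y0 : V}
    (hx0c : x0 ∈ c) (hx0m : x0 ∈ m) (hy0c : y0 ∉ c) (hy0m : y0 ∉ m) : c = m := by
  have h1 : ∀ z ∈ c, z ∈ m := by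
    intro z hz
    by_contra hzm
    obtain ⟨x, y, hadj, hxc, hyc, hxA, hyA⟩ := induce_no_split hc1 hx0c hz hx0m hzm
    have hmem : s(x, y) ∈ cob G m := ⟨x, y, rfl, hadj, hxA, hyA⟩
    obtain ⟨p, q, hpq, _, hpc, hqc⟩ := hsub hmem
    rw [Sym2.eq_iff] at hpq
    rcases hpq with ⟨rfl, rfl⟩ | ⟨rfl, rfl⟩
    · exact hqc hyc
    · exact hqc hxc
  have h2 : ∀ z, z ∉ c → z ∉ m := by
    intro z hzc hzm
    have hy0m' : y0 ∈ (mᶜ : Set V) := hy0m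
    obtain ⟨x, y, hadj, hxc, hyc, hxA, hyA⟩ :=
      induce_no_split hc2 (show y0 ∈ (cᶜ : Set V) from hy0c) (show z ∈ (cᶜ : Set V) from hzc)
        hy0m' (show z ∉ (mᶜ : Set V) from fun h => h hzm)
    have hyA' : y ∈ m := by simpa using hyA
    have hmem : s(y, x) ∈ cob G m := ⟨y, x, rfl, hadj.symm, hyA', hxA⟩
    obtain ⟨p, q, hpq, _, hpc, hqc⟩ := hsub hmem
    rw [Sym2.eq_iff] at hpq
    rcases hpq with ⟨rfl, rfl⟩ | ⟨rfl, rfl⟩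
    · exact hyc hpc
    · exact hxc hpc
  ext z
  exact ⟨fun h => h1 z h, fun h => by_contra fun hc => h2 z hc h⟩

/-! ### iso transport -/

section IsoTransport
variable {G : SimpleGraph V} (α : G ≃g G) (c : Set V)

lemma iso_cob_mem {x y : V} : s(x, y) ∈ cob G (⇑α ⁻¹' c) ↔ s(α x, α y) ∈ cob G c := by
  rw [mem_cob_iff, mem_cob_iff]
  constructor
  · rintro ⟨hadj, h⟩
    exact ⟨α.map_rel_iff.2 hadj, by simpa using h⟩
  · rintro ⟨hadj, h⟩
    refine ⟨α.map_rel_iff.1 hadj, by simpa using h⟩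

lemma iso_cob : cob G (⇑α ⁻¹' c) = Sym2.map ⇑α.symm '' cob G c := by
  ext e
  induction e with
  | _ x y =>
      rw [iso_cob_mem]
      constructor
      · intro h
        refine ⟨s(α x, α y), h, ?_⟩
        simp [Sym2.map_pair_eq]
      · rintro ⟨f, hf, hfe⟩
        induction f with
        | _ p q =>
            rw [Sym2.map_pair_eq, Sym2.eq_iff] at hfe
            rcases hfe with ⟨rfl, rfl⟩ | ⟨rfl, rfl⟩
            · simpa using hf
            · rw [Sym2.eq_swap]
              simpa using hf
  
lemma iso_cob_finite (h : (cob G c).Finite) : (cob G (⇑α ⁻¹' c)).Finite := by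
  rw [iso_cob]; exact h.image _

lemma iso_cob_ncard : (cob G (⇑α ⁻¹' c)).ncard = (cob G c).ncard := by
  rw [iso_cob]
  exact Set.ncard_image_of_injective _ (Sym2.map.injective α.symm.injective)

lemma iso_cobVerts : cobVerts G (⇑α ⁻¹' c) = ⇑α ⁻¹' cobVerts G c := by
  ext v
  constructor
  · rintro ⟨w, hw⟩
    exact ⟨α w, (iso_cob_mem α c).1 hw⟩
  · rintro ⟨w, hw⟩
    refine ⟨α.symm w, (iso_cob_mem α c).2 ?_⟩
    simpa using hw

lemma iso_induce_connected {c : Set V} (h : (G.induce c).Connected) :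
    (G.induce (⇑α ⁻¹' c)).Connected := by
  have hmap : ∀ z : ↥c, α.symm z.1 ∈ ⇑α ⁻¹' c := by
    rintro ⟨z, hz⟩; simpa using hz
  refine SimpleGraph.Connected.map
    (⟨fun z => ⟨α.symm z.1, hmap z⟩, ?_⟩ : G.induce c →g G.induce (⇑α ⁻¹' c)) ?_ h
  · rintro ⟨z, hz⟩ ⟨z', hz'⟩ hadj
    exact α.symm.map_rel_iff.2 hadj
  · rintro ⟨v, hv⟩
    exact ⟨⟨α v, hv⟩, Subtype.ext (show α.symm (α v) = v by simp)⟩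

lemma iso_tight {c : Set V} (h : Tight G c) : Tight G (⇑α ⁻¹' c) := by
  refine ⟨iso_induce_connected α h.1, ?_⟩
  have h2 := iso_induce_connected α h.2
  rwa [Set.preimage_compl] at h2

end IsoTransport

/-! ### ultrafilter helpers -/

lemma uf_pigeon {α : Type*} (U : Ultrafilter ℕ) {S : Set α} (hS : S.Finite) (f : ℕ → α)
    (h : {j | f j ∈ S} ∈ U) : ∃ a ∈ S, {j | f j = a} ∈ U := by
  classical
  refine Set.Finite.induction_on
    (motive := fun S _ => {j | f j ∈ S} ∈ U → ∃ a ∈ S, {j | f j = a} ∈ U) S hS ?_ ?_ h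
  · intro h0
    simpa using U.nonempty_of_mem h0
  · intro a s _ _ ih h0
    have hu : ({j | f j = a} ∪ {j | f j ∈ s}) ∈ U := by
      refine Filter.mem_of_superset h0 ?_
      intro j hj
      rcases hj with h | h
      · exact Or.inl h
      · exact Or.inr h
    rcases Ultrafilter.union_mem_iff.1 hu with h | h
    · exact ⟨a, Set.mem_insert _ _, h⟩
    · obtain ⟨b, hb, hbU⟩ := ih h
      exact ⟨b, Set.mem_insert_of_mem _ hb, hbU⟩

/-! ### Part 2 : quasi-transitive graphs have uniformly bounded tight cuts -/

lemma part2core {X : SimpleGraph V} {n' : ℕ}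
    (U : Ultrafilter ℕ) (c : ℕ → Set V) (p q : V)
    (htight : ∀ j, Tight X (c j)) (hfin : ∀ j, (cob X (c j)).Finite)
    (hcard : ∀ j, (cob X (c j)).ncard < n')
    (hpq : {j | p ∈ c j ∧ q ∉ c j} ∈ U) :
    ∃ S : Set ℕ, S ∈ U ∧ ∃ cl : Set V, ∀ j ∈ S, c j = cl := by
  classical
  set m : Set V := {v | {j | v ∈ c j} ∈ U} with hm
  have hedge : ∀ f ∈ cob X m, {j | f ∈ cob X (c j)} ∈ U := by
    rintro f ⟨x, y, rfl, hadj, hx, hy⟩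
    have hx' : {j | x ∈ c j} ∈ U := hx
    have hy' : {j | y ∈ c j}ᶜ ∈ U := Ultrafilter.compl_mem_iff_notMem.2 hy
    refine Filter.mem_of_superset (Filter.inter_mem hx' hy') ?_
    rintro j ⟨h1, h2⟩
    exact ⟨x, y, rfl, hadj, h1, h2⟩
  have hsubU : ∀ t : Set (Sym2 V), t.Finite → t ⊆ cob X m →
      {j | t ⊆ cob X (c j)} ∈ U := by
    intro t ht hts
    have heq : {j | t ⊆ cob X (c j)} = ⋂ f ∈ t, {j | f ∈ cob X (c j)} := by
      ext j; simp [Set.subset_def]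
    rw [heq]
    exact (Filter.biInter_mem ht).2 fun f hf => hedge f (hts hf)
  have hfinm : (cob X m).Finite := by
    by_contra hinf
    obtain ⟨t, hts, htf, htc⟩ := (show (cob X m).Infinite from hinf).exists_subset_ncard_eq n'
    obtain ⟨j, hj⟩ := Filter.nonempty_of_mem (hsubU t htf hts)
    have hle := Set.ncard_le_ncard hj (hfin j)
    have := hcard j
    omega
  have hS0 : {j | cob X m ⊆ cob X (c j)} ∈ U := hsubU _ hfinm Set.Subset.rfl
  have hpm : p ∈ m := by
    show {j | p ∈ c j} ∈ U
    exact Filter.mem_of_superset hpq fun j h => h.1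
  have hqm : q ∉ m := by
    intro hq
    have hint : {j | q ∈ c j} ∩ {j | p ∈ c j ∧ q ∉ c j} ∈ U :=
      Filter.inter_mem hq hpq
    obtain ⟨j, h1, h2⟩ := Filter.nonempty_of_mem hint
    exact h2.2 h1
  refine ⟨{j | cob X m ⊆ cob X (c j)} ∩ {j | p ∈ c j ∧ q ∉ c j},
    Filter.inter_mem hS0 hpq, m, ?_⟩
  rintro j ⟨h1, h2⟩
  exact rigid (htight j).1 (htight j).2 h1 h2.1 hpm h2.2 hqm

lemma part2 {X : SimpleGraph V} (hqt : QuasiTransitive X)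
    (hloc : ∀ v : V, (X.neighborSet v).Finite) (n' : ℕ) :
    ∃ M : ℕ, ∀ c : Set V, Tight X c → (cob X c).Finite → (cob X c).ncard < n' →
      ∀ x ∈ cobVerts X c, ∀ y ∈ cobVerts X c, X.dist x y ≤ M := by
  classical
  by_contra hcon
  push_neg at hcon
  choose cs htight hfin hcard xs hxs ys hys hdist using hcon
  obtain ⟨F, hFfin, hFOrb⟩ := hqt
  choose αs ws hwF hα using fun j => hFOrb (xs j)
  set cH : ℕ → Set V := fun j => ⇑(αs j) ⁻¹' cs j with hcH
  have htight' : ∀ j, Tight X (cH j) := fun j => iso_tight (αs j) (htight j)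
  have hfin' : ∀ j, (cob X (cH j)).Finite := fun j => iso_cob_finite (αs j) _ (hfin j)
  have hcard' : ∀ j, (cob X (cH j)).ncard < n' := fun j => by
    rw [hcH]; rw [iso_cob_ncard]; exact hcard j
  have hwmem : ∀ j, ws j ∈ cobVerts X (cH j) := by
    intro j
    rw [hcH, iso_cobVerts]
    show αs j (ws j) ∈ cobVerts X (cs j)
    rw [hα j]; exact hxs j
  set yH : ℕ → V := fun j => (αs j).symm (ys j) with hyH
  have hymem : ∀ j, yH j ∈ cobVerts X (cH j) := by
    intro j
    rw [hcH, iso_cobVerts]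
    show αs j ((αs j).symm (ys j)) ∈ cobVerts X (cs j)
    rw [RelIso.apply_symm_apply]
    exact hys j
  have hdist' : ∀ j, j < X.dist (ws j) (yH j) := by
    intro j
    have h1 : X.dist (αs j (ws j)) (αs j (yH j)) = X.dist (ws j) (yH j) :=
      iso_dist _ _ _
    rw [hα j] at h1
    have h2 : αs j (yH j) = ys j := by
      rw [hyH]; exact RelIso.apply_symm_apply _ _
    rw [h2] at h1
    rw [← h1]
    exact hdist j
  set U : Ultrafilter ℕ := Filter.hyperfilter ℕ with hU
  have h1 : {j | ws j ∈ F} ∈ U := by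
    have heq : {j | ws j ∈ F} = Set.univ := by
      ext j; simp [hwF j]
    rw [heq]; exact Filter.univ_mem
  obtain ⟨xst, hxstF, hU1⟩ := uf_pigeon U hFfin ws h1
  have hex : ∀ j, ∃ w, s(ws j, w) ∈ cob X (cH j) := fun j => hwmem j
  choose zs hz using hex
  have hzadj : ∀ j, X.Adj (ws j) (zs j) := fun j => (mem_cob_iff.1 (hz j)).1
  have h2 : {j | zs j ∈ X.neighborSet xst} ∈ U := by
    refine Filter.mem_of_superset hU1 ?_
    intro j hj
    have hadj := hzadj j
    have hjw : ws j = xst := hj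
    rw [hjw] at hadj
    exact hadj
  obtain ⟨zst, hzstN, hU2'⟩ := uf_pigeon U (hloc xst) zs h2
  have hU2 : ({j | ws j = xst} ∩ {j | zs j = zst}) ∈ U := Filter.inter_mem hU1 hU2'
  have horient : ({j | ws j = xst} ∩ {j | zs j = zst}) ⊆
      {j | xst ∈ cH j ∧ zst ∉ cH j} ∪ {j | zst ∈ cH j ∧ xst ∉ cH j} := by
    rintro j ⟨hjw, hjz⟩
    have hor := (mem_cob_iff.1 (hz j)).2
    have hjw' : ws j = xst := hjw
    have hjz' : zs j = zst := hjz
    rw [hjw', hjz'] at hor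
    rcases hor with h | h
    · exact Or.inl h
    · exact Or.inr h
  have hunion : ({j | xst ∈ cH j ∧ zst ∉ cH j} ∪ {j | zst ∈ cH j ∧ xst ∉ cH j}) ∈ U :=
    Filter.mem_of_superset hU2 horient
  have hcore : ∃ S : Set ℕ, S ∈ U ∧ ∃ cl : Set V, ∀ j ∈ S, cH j = cl := by
    rcases Ultrafilter.union_mem_iff.1 hunion with h | h
    · exact part2core U cH xst zst htight' hfin' hcard' h
    · exact part2core U cH zst xst htight' hfin' hcard' h
  obtain ⟨S, hSU, cl, hSc⟩ := hcore
  obtain ⟨j₀, hj₀⟩ := Filter.nonempty_of_mem hSU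
  have hcobfin : (cobVerts X cl).Finite := by
    have h3 := (cobVerts_card (hfin' j₀)).1
    rwa [hSc j₀ hj₀] at h3
  have himg : ((fun y' => X.dist xst y') '' cobVerts X cl).Finite := hcobfin.image _
  obtain ⟨D, hD⟩ := himg.bddAbove
  have hSS : (S ∩ ({j | ws j = xst} ∩ {j | zs j = zst})) ∈ U := Filter.inter_mem hSU hU2
  have hinf : (S ∩ ({j | ws j = xst} ∩ {j | zs j = zst})).Infinite := by
    by_contra hf
    exact Set.Finite.notMem_hyperfilter (Set.not_infinite.1 hf) hSS
  have hbig : ∃ j ∈ (S ∩ ({j | ws j = xst} ∩ {j | zs j = zst})), D < j := by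
    by_contra hno
    push_neg at hno
    exact hinf (Set.Finite.subset (Set.finite_Iic D) fun j hj => hno j hj)
  obtain ⟨j, ⟨hjS, hjw, _⟩, hjD⟩ := hbig
  have hy1 : yH j ∈ cobVerts X cl := by
    rw [← hSc j hjS]; exact hymem j
  have hy2 : X.dist xst (yH j) ≤ D := hD (Set.mem_image_of_mem _ hy1)
  have hy3 : j < X.dist (ws j) (yH j) := hdist' j
  have hjw' : ws j = xst := hjw
  rw [hjw'] at hy3
  omega

/-! ### ReachOut utilities -/

lemma reachout_not_mem_left {G : SimpleGraph V} {S : Set V} {x y : V}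
    (h : ReachOut G S x y) : x ∉ S := by
  obtain ⟨w, hw⟩ := h
  exact hw x w.start_mem_support

lemma reachout_not_mem {G : SimpleGraph V} {S : Set V} {x y : V}
    (h : ReachOut G S x y) : y ∉ S := by
  obtain ⟨w, hw⟩ := h
  exact hw y w.end_mem_support

lemma reachout_refl {G : SimpleGraph V} {S : Set V} {x : V} (hx : x ∉ S) : ReachOut G S x x := by
  refine ⟨SimpleGraph.Walk.nil, ?_⟩
  intro y hy
  rw [SimpleGraph.Walk.support_nil, List.mem_singleton] at hy
  subst hy; exact hx

lemma reachout_symm {G : SimpleGraph V} {S : Set V} {x y : V}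
    (h : ReachOut G S x y) : ReachOut G S y x := by
  obtain ⟨w, hw⟩ := h
  refine ⟨w.reverse, ?_⟩
  intro z hz
  rw [SimpleGraph.Walk.support_reverse, List.mem_reverse] at hz
  exact hw z hz

lemma reachout_trans {G : SimpleGraph V} {S : Set V} {x y z : V}
    (h1 : ReachOut G S x y) (h2 : ReachOut G S y z) : ReachOut G S x z := by
  obtain ⟨w1, hw1⟩ := h1
  obtain ⟨w2, hw2⟩ := h2
  refine ⟨w1.append w2, ?_⟩
  intro p hp
  rw [SimpleGraph.Walk.support_append] at hp
  rcases List.mem_append.1 hp with h | h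
  · exact hw1 p h
  · exact hw2 p (List.mem_of_mem_tail h)

lemma reachout_adj {G : SimpleGraph V} {S : Set V} {x y : V}
    (hadj : G.Adj x y) (hx : x ∉ S) (hy : y ∉ S) : ReachOut G S x y := by
  refine ⟨SimpleGraph.Walk.cons hadj SimpleGraph.Walk.nil, ?_⟩
  intro z hz
  rw [SimpleGraph.Walk.support_cons] at hz
  rcases List.mem_cons.1 hz with rfl | hz
  · exact hx
  · rw [SimpleGraph.Walk.support_nil, List.mem_singleton] at hz
    subst hz; exact hy

lemma reachout_support {G : SimpleGraph V} {S : Set V} {x y : V} {w : G.Walk x y}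
    (hw : ∀ z ∈ w.support, z ∉ S) : ∀ z ∈ w.support, ReachOut G S x z := by
  classical
  intro z hz
  exact ⟨w.takeUntil z hz, fun p hp => hw p (SimpleGraph.Walk.support_takeUntil_subset _ _ hp)⟩

/-! ### bounded travel along a relation through a finite set -/

lemma walk_support_fromRel {R : V → V → Prop} {T : Set V}
    (hmem : ∀ a b, R a b → a ∈ T ∧ b ∈ T) :
    ∀ {a b : V} (w : (SimpleGraph.fromRel R).Walk a b), ∀ y ∈ w.support, y = a ∨ y ∈ T := by
  intro a b w
  induction w with
  | nil =>
      intro y hy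
      rw [SimpleGraph.Walk.support_nil, List.mem_singleton] at hy
      exact Or.inl hy
  | @cons p q rr hadj w ih =>
      intro y hy
      rw [SimpleGraph.Walk.support_cons] at hy
      rcases List.mem_cons.1 hy with rfl | hy
      · exact Or.inl rfl
      · rcases ih y hy with rfl | hT
        · obtain ⟨-, hr | hr⟩ := (SimpleGraph.fromRel_adj R p y).1 hadj
          · exact Or.inr (hmem _ _ hr).2
          · exact Or.inr (hmem _ _ hr).1
        · exact Or.inr hT

lemma walk_dist_le_fromRel {X : SimpleGraph V} (hcX : X.Connected) {R : V → V → Prop}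
    {M : ℕ} (hM : ∀ a b, R a b → X.dist a b ≤ M) :
    ∀ {a b : V} (w : (SimpleGraph.fromRel R).Walk a b), X.dist a b ≤ w.length * M := by
  intro a b w
  induction w with
  | nil => simp [SimpleGraph.dist_self]
  | @cons p q rr hadj w ih =>
      have h1 : X.dist p q ≤ M := by
        obtain ⟨-, hr | hr⟩ := (SimpleGraph.fromRel_adj R p q).1 hadj
        · exact hM _ _ hr
        · rw [SimpleGraph.dist_comm]; exact hM _ _ hr
      calc X.dist p rr ≤ X.dist p q + X.dist q rr := hcX.dist_triangle
        _ ≤ M + w.length * M := Nat.add_le_add h1 ih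
        _ = (SimpleGraph.Walk.cons hadj w).length * M := by
            rw [SimpleGraph.Walk.length_cons]; ring

lemma reltrans_reachable {R : V → V → Prop} {s t : V}
    (h : Relation.ReflTransGen R s t) : (SimpleGraph.fromRel R).Reachable s t := by
  induction h with
  | refl => exact SimpleGraph.Reachable.refl _
  | tail hab hbc ih =>
      rename_i b c
      by_cases hbceq : b = c
      · subst hbceq; exact ih
      · exact ih.trans (SimpleGraph.Adj.reachable ((SimpleGraph.fromRel_adj R b c).2 ⟨hbceq, Or.inl hbc⟩))

lemma reltrans_dist_le {X : SimpleGraph V} (hcX : X.Connected) {R : V → V → Prop} {T : Set V}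
    (hT : T.Finite) (hmem : ∀ a b, R a b → a ∈ T ∧ b ∈ T) {M : ℕ}
    (hM : ∀ a b, R a b → X.dist a b ≤ M) {s t : V} (h : Relation.ReflTransGen R s t) :
    X.dist s t ≤ (T.ncard + 1) * M := by
  classical
  have hreach := reltrans_reachable h
  obtain ⟨p, hp⟩ := hreach.exists_walk_length_eq_dist
  have hpath : p.IsPath := SimpleGraph.Walk.isPath_of_length_eq_dist p hp
  have hnodup : p.support.Nodup := hpath.support_nodup
  have hsupp : ∀ y ∈ p.support, y ∈ insert s T := by
    intro y hy
    rcases walk_support_fromRel hmem p y hy with rfl | hT'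
    · exact Set.mem_insert _ _
    · exact Set.mem_insert_of_mem _ hT'
  have hlen : p.length + 1 ≤ T.ncard + 1 + 1 := by
    have hfin : (insert s T).Finite := hT.insert s
    have h1 : p.support.toFinset.card = p.support.length :=
      List.toFinset_card_of_nodup hnodup
    have h2 : p.support.toFinset ⊆ hfin.toFinset := by
      intro y hy
      rw [List.mem_toFinset] at hy
      rw [Set.Finite.mem_toFinset]
      exact hsupp y hy
    have h3 : p.support.toFinset.card ≤ hfin.toFinset.card := Finset.card_le_card h2
    have h4 : hfin.toFinset.card = (insert s T).ncard :=
      (Set.ncard_eq_toFinset_card _ hfin).symm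
    have h5 : (insert s T).ncard ≤ T.ncard + 1 := Set.ncard_insert_le _ _
    have h6 : p.support.length = p.length + 1 := SimpleGraph.Walk.length_support p
    omega
  have hd := walk_dist_le_fromRel hcX hM p
  have : X.dist s t ≤ p.length * M := hd
  calc X.dist s t ≤ p.length * M := hd
    _ ≤ (T.ncard + 1) * M := Nat.mul_le_mul_right M (by omega)

/-! ### quasi-isometry walk filling -/

section Fill
variable {X : SimpleGraph V} {Γ : SimpleGraph W}
  {L : ℕ} {ψ : V → W} {φ : W → V}

/-- images under φ of vertices at Γ-distance at most 1 are at X-distance at most SB -/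
lemma phi_step (hcΓ : Γ.Connected) (hψ : NQI X Γ L ψ)
    (hφ : ∀ w, Γ.dist w (ψ (φ w)) ≤ L) {z z' : W} (h : Γ.dist z z' ≤ 1) :
    X.dist (φ z) (φ z') ≤ L * (2 * L + 1) + L := by
  have h1 : X.dist (φ z) (φ z') ≤ L * Γ.dist (ψ (φ z)) (ψ (φ z')) + L := hψ.2.2.1 _ _
  have h2 : Γ.dist (ψ (φ z)) (ψ (φ z')) ≤ Γ.dist (ψ (φ z)) z + (Γ.dist z z' + Γ.dist z' (ψ (φ z'))) :=
    (hcΓ.dist_triangle).trans (Nat.add_le_add_left hcΓ.dist_triangle _)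
  have h3 : Γ.dist (ψ (φ z)) z ≤ L := by rw [SimpleGraph.dist_comm]; exact hφ z
  have h4 : Γ.dist z' (ψ (φ z')) ≤ L := hφ z'
  have h5 : Γ.dist (ψ (φ z)) (ψ (φ z')) ≤ 2 * L + 1 := by omega
  calc X.dist (φ z) (φ z') ≤ L * Γ.dist (ψ (φ z)) (ψ (φ z')) + L := h1
    _ ≤ L * (2 * L + 1) + L := by
        have := Nat.mul_le_mul_left L h5; omega

/-- lower bound transfer -/
lemma phi_lower (hcΓ : Γ.Connected) (hψ : NQI X Γ L ψ)
    (hφ : ∀ w, Γ.dist w (ψ (φ w)) ≤ L) (z z' : W) :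
    Γ.dist z z' ≤ L * X.dist (φ z) (φ z') + 3 * L := by
  have h2 : Γ.dist z z' ≤ Γ.dist z (ψ (φ z)) + (Γ.dist (ψ (φ z)) (ψ (φ z')) + Γ.dist (ψ (φ z')) z') :=
    (hcΓ.dist_triangle).trans (Nat.add_le_add_left hcΓ.dist_triangle _)
  have h3 : Γ.dist (ψ (φ z)) (ψ (φ z')) ≤ L * X.dist (φ z) (φ z') + L := hψ.2.1 _ _
  have h4 : Γ.dist z (ψ (φ z)) ≤ L := hφ z
  have h5 : Γ.dist (ψ (φ z')) z' ≤ L := by rw [SimpleGraph.dist_comm]; exact hφ z'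
  omega

/-- filling a Γ-walk into an X-walk staying quasi-close to the support set -/
lemma fill (hcX : X.Connected) (hcΓ : Γ.Connected) (hψ : NQI X Γ L ψ)
    (hφ : ∀ w, Γ.dist w (ψ (φ w)) ≤ L) :
    ∀ {z₀ z₁ : W} (w : Γ.Walk z₀ z₁) {S : Set W}, (∀ z ∈ w.support, z ∈ S) →
    ∃ q : X.Walk (φ z₀) (φ z₁), ∀ x ∈ q.support, ∃ z ∈ S,
      Γ.dist (ψ x) z ≤ L * (L * (2 * L + 1) + L) + 2 * L := by
  intro z₀ z₁ w
  induction w with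
  | @nil u =>
      intro S hS
      refine ⟨SimpleGraph.Walk.nil, ?_⟩
      intro x hx
      rw [SimpleGraph.Walk.support_nil, List.mem_singleton] at hx
      subst hx
      refine ⟨u, hS u (by simp), ?_⟩
      have hu := hφ u
      rw [SimpleGraph.dist_comm] at hu
      have hL : L ≤ L * (L * (2 * L + 1) + L) + 2 * L := by
        have h1 : L ≤ 2 * L := by omega
        exact h1.trans (Nat.le_add_left _ _)
      omega
  | @cons za zb zc hadj p ih =>
      intro S hS
      have hSp : ∀ z ∈ p.support, z ∈ S := fun z hz =>
        hS z (by rw [SimpleGraph.Walk.support_cons]; exact List.mem_cons_of_mem _ hz)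
      obtain ⟨q', hq'⟩ := ih hSp
      obtain ⟨g, hg⟩ := hcX.exists_walk_length_eq_dist (φ za) (φ zb)
      have hdab : Γ.dist za zb ≤ 1 := SimpleGraph.dist_le (SimpleGraph.Walk.cons hadj SimpleGraph.Walk.nil)
      have hgb : X.dist (φ za) (φ zb) ≤ L * (2 * L + 1) + L := phi_step hcΓ hψ hφ hdab
      refine ⟨g.append q', ?_⟩
      intro x hx
      rw [SimpleGraph.Walk.support_append] at hx
      rcases List.mem_append.1 hx with hx | hx
      · refine ⟨za, hS za (by rw [SimpleGraph.Walk.support_cons]; exact List.mem_cons_self), ?_⟩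
        have hd1 : X.dist (φ za) x ≤ g.length := dist_le_of_mem_support g hx
        rw [hg] at hd1
        have hd2 : X.dist (φ za) x ≤ L * (2 * L + 1) + L := hd1.trans hgb
        have hd3 : Γ.dist (ψ (φ za)) (ψ x) ≤ L * X.dist (φ za) x + L := hψ.2.1 _ _
        have hd4 : Γ.dist (ψ x) za ≤ Γ.dist (ψ x) (ψ (φ za)) + Γ.dist (ψ (φ za)) za :=
          hcΓ.dist_triangle
        have hd5 : Γ.dist (ψ (φ za)) za ≤ L := by rw [SimpleGraph.dist_comm]; exact hφ za
        have hd6 : Γ.dist (ψ x) (ψ (φ za)) = Γ.dist (ψ (φ za)) (ψ x) := SimpleGraph.dist_comm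
        have hd7 : L * X.dist (φ za) x ≤ L * (L * (2 * L + 1) + L) := Nat.mul_le_mul_left L hd2
        omega
      · exact hq' x (List.mem_of_mem_tail hx)

end Fill

/-- walking to the base avoiding one ReachOut-component -/
lemma comp_filter_walk {X : SimpleGraph V} {C₀ : Set V} {xh : V} {x₀ : V}
    (hx₀ : x₀ ∈ C₀) (hwalk : ∀ z ∈ C₀, ∃ w : X.Walk z x₀, ∀ y ∈ w.support, y ∈ C₀) :
    ∀ {z : V} (w : X.Walk z x₀), ¬ ReachOut X C₀ xh z →
      ∃ w' : X.Walk z x₀, ∀ y ∈ w'.support, ¬ ReachOut X C₀ xh y := by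
  have hC₀walk : ∀ z ∈ C₀, ∃ w' : X.Walk z x₀, ∀ y ∈ w'.support, ¬ ReachOut X C₀ xh y := by
    intro z hz
    obtain ⟨w, hw⟩ := hwalk z hz
    exact ⟨w, fun y hy hyK => reachout_not_mem hyK (hw y hy)⟩
  have main : ∀ {z zb : V} (w : X.Walk z zb), zb ∈ C₀ → ¬ ReachOut X C₀ xh z →
      ∃ w' : X.Walk z x₀, ∀ y ∈ w'.support, ¬ ReachOut X C₀ xh y := by
    intro z zb w
    induction w with
    | @nil zz => intro hzz _; exact hC₀walk zz hzz
    | @cons p p'' q hadj w' ih =>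
        intro hqC₀ hpK
        by_cases hpc₀ : p ∈ C₀
        · exact hC₀walk p hpc₀
        · have hp''K : ¬ ReachOut X C₀ xh p'' := by
            intro hc'
            by_cases hp''c₀ : p'' ∈ C₀
            · exact reachout_not_mem hc' hp''c₀
            · exact hpK (reachout_trans hc' (reachout_adj hadj.symm hp''c₀ hpc₀))
          obtain ⟨w'', hw''⟩ := ih hqC₀ hp''K
          refine ⟨SimpleGraph.Walk.cons hadj w'', ?_⟩
          intro y hy
          rw [SimpleGraph.Walk.support_cons] at hy
          rcases List.mem_cons.1 hy with rfl | hy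
          · exact hpK
          · exact hw'' y hy
  intro z w hz
  exact main w hx₀ hz

/-! ### Part 1 : transferring a tight cut of Γ to a tight cut of X -/

lemma part1 {X : SimpleGraph V} {Γ : SimpleGraph W} (hcX : X.Connected) (hcΓ : Γ.Connected)
    {dX : ℕ} (hdegX : DegLe X dX) {L : ℕ} {ψ : V → W} (hψ : NQI X Γ L ψ) (n : ℕ) :
    ∃ n' A B : ℕ, ∀ b : Set W, Tight Γ b → (cob Γ b).Finite → (cob Γ b).ncard < n →
      ∀ u ∈ cobVerts Γ b, ∀ v ∈ cobVerts Γ b,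
        Γ.dist u v ≤ B ∨
        ∃ c : Set V, Tight X c ∧ (cob X c).Finite ∧ (cob X c).ncard < n' ∧
          ∃ x' ∈ cobVerts X c, ∃ y' ∈ cobVerts X c,
            Γ.dist u v ≤ A * X.dist x' y' + B := by
  classical
  choose φ hφ using hψ.2.2.2
  -- abstract constants
  obtain ⟨SB, hSB⟩ : ∃ k : ℕ, k = L * (2 * L + 1) + L := ⟨_, rfl⟩
  obtain ⟨r, hr⟩ : ∃ k : ℕ, k = L * SB + 2 * L := ⟨_, rfl⟩
  obtain ⟨rT, hrT⟩ : ∃ k : ℕ, k = 2 * r + 4 * L := ⟨_, rfl⟩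
  obtain ⟨ρ, hρ⟩ : ∃ k : ℕ, k = L * (2 * rT) + L := ⟨_, rfl⟩
  obtain ⟨nT, hnT⟩ : ∃ k : ℕ, k = (n * 2) * ((dX + 1) ^ ρ) := ⟨_, rfl⟩
  obtain ⟨C8, hC8⟩ : ∃ k : ℕ, k = 2 * r + L * SB + 2 * L := ⟨_, rfl⟩
  obtain ⟨τ, hτ⟩ : ∃ k : ℕ, k = L * (C8 + L) + L + SB := ⟨_, rfl⟩
  obtain ⟨D₁, hD₁⟩ : ∃ k : ℕ, k = 2 * τ + SB + 2 := ⟨_, rfl⟩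
  obtain ⟨D₂, hD₂⟩ : ∃ k : ℕ, k = 2 * D₁ + SB + 1 := ⟨_, rfl⟩
  obtain ⟨A, hA⟩ : ∃ k : ℕ, k = L * (2 * n + 1) := ⟨_, rfl⟩
  obtain ⟨B, hB⟩ : ∃ k : ℕ, k = A * D₁ + A * (2 * D₂) + 3 * L := ⟨_, rfl⟩
  have hLr : L ≤ r := by
    have h1 : L ≤ 2 * L := by omega
    rw [hr]; exact h1.trans (Nat.le_add_left _ _)
  have hstep : ∀ z z' : W, Γ.dist z z' ≤ 1 → X.dist (φ z) (φ z') ≤ SB := by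
    intro z z' h
    rw [hSB]; exact phi_step hcΓ hψ hφ h
  have hC6r : L * SB + 2 * L = r := hr.symm
  refine ⟨nT * nT + 1, A, B, ?_⟩
  intro b hbt hbfin hbcard u hu v hv
  -- extract crossing data at u and v
  have hextract : ∀ z ∈ cobVerts Γ b, ∃ z₁ z₂ : W, z₁ ∈ b ∧ z₂ ∉ b ∧ Γ.Adj z₁ z₂ ∧
      Γ.dist z z₁ ≤ 1 ∧ Γ.dist z z₂ ≤ 1 := by
    intro z hz
    obtain ⟨w', hadj, hcase⟩ := mem_cobVerts_iff.1 hz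
    have hd1 : Γ.dist z w' ≤ 1 := SimpleGraph.dist_le (SimpleGraph.Walk.cons hadj SimpleGraph.Walk.nil)
    rcases hcase with ⟨hz1, hz2⟩ | ⟨hz1, hz2⟩
    · exact ⟨z, w', hz1, hz2, hadj, by simp [SimpleGraph.dist_self], hd1⟩
    · exact ⟨w', z, hz1, hz2, hadj.symm, hd1, by simp [SimpleGraph.dist_self]⟩
  obtain ⟨u₁, u₂, hu₁, hu₂, huadj, hdu₁, hdu₂⟩ := hextract u hu
  obtain ⟨v₁, v₂, hv₁, hv₂, hvadj, hdv₁, hdv₂⟩ := hextract v hv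
  -- the thickened set a and the component c₀
  set a : Set V := {x | ∃ w' ∈ b, Γ.dist (ψ x) w' ≤ r} with ha
  have hφb_a : ∀ z ∈ b, φ z ∈ a := by
    intro z hz
    refine ⟨z, hz, ?_⟩
    have := hφ z
    rw [SimpleGraph.dist_comm] at this
    exact this.trans hLr
  obtain ⟨x₀, hx₀⟩ : ∃ p : V, p = φ u₁ := ⟨_, rfl⟩
  have hx₀a : x₀ ∈ a := by rw [hx₀]; exact hφb_a u₁ hu₁
  set c₀ : Set V := {x | ReachOut X aᶜ x₀ x} with hc₀
  have hc₀a : c₀ ⊆ a := by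
    intro z hz
    have := reachout_not_mem hz
    simpa using this
  have hx₀c₀ : x₀ ∈ c₀ := reachout_refl (by simpa using hx₀a)
  -- fill wrapper
  have hfill : ∀ {z₀ z₁ : W} (w : Γ.Walk z₀ z₁) {S : Set W}, (∀ z ∈ w.support, z ∈ S) →
      ∃ q : X.Walk (φ z₀) (φ z₁), ∀ x ∈ q.support, ∃ z ∈ S, Γ.dist (ψ x) z ≤ r := by
    intro z₀ z₁ w S hS
    obtain ⟨q, hq⟩ := fill hcX hcΓ hψ hφ w hS
    refine ⟨q, fun x hx => ?_⟩
    obtain ⟨z, hz, hd⟩ := hq x hx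
    exact ⟨z, hz, by rw [hr, hSB]; exact hd⟩
  -- φ of b lands in c₀
  have hφbc₀ : ∀ z ∈ b, φ z ∈ c₀ := by
    intro z hz
    obtain ⟨wi⟩ := hbt.1.preconnected ⟨u₁, hu₁⟩ ⟨z, hz⟩
    obtain ⟨w', hw'⟩ := walk_of_induce wi
    obtain ⟨q, hq⟩ := hfill w' hw'
    show ReachOut X aᶜ x₀ (φ z)
    rw [hx₀]
    refine ⟨q, ?_⟩
    intro y hy
    obtain ⟨z', hz', hd⟩ := hq y hy
    simp only [Set.mem_compl_iff]
    intro hcon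
    exact hcon ⟨z', hz', hd⟩
  -- crossing near the coboundary
  have hnear : ∀ z z' : W, z ∈ b → z' ∉ b → ∃ s ∈ cobVerts Γ b, Γ.dist z s ≤ Γ.dist z z' := by
    intro z z' hz hz'
    obtain ⟨g, hg⟩ := hcΓ.exists_walk_length_eq_dist z z'
    obtain ⟨x1, y1, hadj1, hx1, hy1, hx1s, _⟩ := exists_cross g hz hz'
    refine ⟨x1, mem_cobVerts_iff.2 ⟨y1, hadj1, Or.inl ⟨hx1, hy1⟩⟩, ?_⟩
    have := dist_le_of_mem_support g hx1s
    rw [hg] at this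
    exact this
  -- the finite vertex set T capturing all coboundary endpoints of a
  set T : Set V := {x | ∃ s ∈ cobVerts Γ b, Γ.dist (ψ x) s ≤ rT} with hT
  have hcv := cobVerts_card hbfin
  have hcvn : (cobVerts Γ b).ncard ≤ n * 2 := by
    have := hcv.2
    have h2 := hbcard
    omega
  have hTbound : T.Finite ∧ T.ncard ≤ nT := by
    have hTeq : T = ⋃ s ∈ cobVerts Γ b, {x : V | Γ.dist (ψ x) s ≤ rT} := by
      ext x; simp [hT]
    have hper : ∀ s ∈ cobVerts Γ b, ({x : V | Γ.dist (ψ x) s ≤ rT}).Finite ∧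
        ({x : V | Γ.dist (ψ x) s ≤ rT}).ncard ≤ (dX + 1) ^ ρ := by
      intro s _
      rcases Set.eq_empty_or_nonempty {x : V | Γ.dist (ψ x) s ≤ rT} with he | ⟨x₀', hx₀'⟩
      · rw [he]; simp
      · have hsub : {x : V | Γ.dist (ψ x) s ≤ rT} ⊆ nball X x₀' ρ := by
          intro x hx
          rw [mem_nball]
          have h1 : X.dist x₀' x ≤ L * Γ.dist (ψ x₀') (ψ x) + L := hψ.2.2.1 _ _
          have h2 : Γ.dist (ψ x₀') (ψ x) ≤ Γ.dist (ψ x₀') s + Γ.dist s (ψ x) := hcΓ.dist_triangle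
          have h3 : Γ.dist s (ψ x) ≤ rT := by rw [SimpleGraph.dist_comm]; exact hx
          have h4 : Γ.dist (ψ x₀') s ≤ rT := hx₀'
          have h5 : Γ.dist (ψ x₀') (ψ x) ≤ 2 * rT := by omega
          have h6 : L * Γ.dist (ψ x₀') (ψ x) ≤ L * (2 * rT) := Nat.mul_le_mul_left L h5
          rw [hρ]; omega
        obtain ⟨hbf, hbc⟩ := nball_finite_card hcX hdegX x₀' ρ
        exact ⟨hbf.subset hsub, (Set.ncard_le_ncard hsub hbf).trans hbc⟩
    obtain ⟨h1, h2⟩ := ncard_biUnion_le hcv.1 _ ((dX + 1) ^ ρ) hper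
    rw [← hTeq] at h1 h2
    refine ⟨h1, ?_⟩
    rw [hnT]
    exact h2.trans (Nat.mul_le_mul_right _ hcvn)
  -- endpoints of the coboundary of a lie in T
  have hend : ∀ x y : V, X.Adj x y → x ∈ a → y ∉ a → x ∈ T ∧ y ∈ T := by
    intro x y hadj hxa hya
    obtain ⟨w', hw'b, hw'd⟩ := hxa
    have hdxy : X.dist x y ≤ 1 := SimpleGraph.dist_le (SimpleGraph.Walk.cons hadj SimpleGraph.Walk.nil)
    have hdψ : Γ.dist (ψ x) (ψ y) ≤ 2 * L := by
      have h1 : Γ.dist (ψ x) (ψ y) ≤ L * X.dist x y + L := hψ.2.1 _ _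
      have h2 : L * X.dist x y ≤ L * 1 := Nat.mul_le_mul_left L hdxy
      omega
    have hψy : ψ y ∉ b := by
      intro hc
      exact hya ⟨ψ y, hc, by simp [SimpleGraph.dist_self]⟩
    have hxT : ∃ s ∈ cobVerts Γ b, Γ.dist (ψ x) s ≤ 2 * r + 2 * L := by
      by_cases hψx : ψ x ∈ b
      · obtain ⟨s, hs, hd⟩ := hnear (ψ x) (ψ y) hψx hψy
        exact ⟨s, hs, by omega⟩
      · obtain ⟨s, hs, hd⟩ := hnear w' (ψ x) hw'b hψx
        refine ⟨s, hs, ?_⟩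
        have h1 : Γ.dist (ψ x) s ≤ Γ.dist (ψ x) w' + Γ.dist w' s := hcΓ.dist_triangle
        have h2 : Γ.dist w' s ≤ Γ.dist w' (ψ x) := hd
        have h3 : Γ.dist w' (ψ x) = Γ.dist (ψ x) w' := SimpleGraph.dist_comm
        omega
    obtain ⟨s, hs, hd⟩ := hxT
    constructor
    · exact ⟨s, hs, by rw [hrT]; omega⟩
    · refine ⟨s, hs, ?_⟩
      have h1 : Γ.dist (ψ y) s ≤ Γ.dist (ψ y) (ψ x) + Γ.dist (ψ x) s := hcΓ.dist_triangle
      have h2 : Γ.dist (ψ y) (ψ x) = Γ.dist (ψ x) (ψ y) := SimpleGraph.dist_comm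
      rw [hrT]; omega
  -- cluster set
  set Tst : Set V := φ '' cobVerts Γ b with hTst
  have hTstfin : Tst.Finite := hcv.1.image φ
  have hTstcard : Tst.ncard ≤ n * 2 := (Set.ncard_image_le hcv.1).trans hcvn
  -- dip lemma
  have hdip : ∀ x : V, x ∈ c₀ → (∃ z : W, z ∉ b ∧ Γ.dist (ψ x) z ≤ r) →
      ∃ t ∈ Tst, X.dist x t ≤ τ := by
    rintro x hxc₀ ⟨z, hzb, hdz⟩
    obtain ⟨w', hw'b, hw'd⟩ := hc₀a hxc₀
    have hdwz : Γ.dist w' z ≤ 2 * r := by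
      have h1 : Γ.dist w' z ≤ Γ.dist w' (ψ x) + Γ.dist (ψ x) z := hcΓ.dist_triangle
      have h2 : Γ.dist w' (ψ x) = Γ.dist (ψ x) w' := SimpleGraph.dist_comm
      omega
    obtain ⟨s, hs, hd⟩ := hnear w' z hw'b hzb
    have hxs : Γ.dist (ψ x) s ≤ C8 := by
      have h1 : Γ.dist (ψ x) s ≤ Γ.dist (ψ x) w' + Γ.dist w' s := hcΓ.dist_triangle
      rw [hC8, hr] at *
      omega
    refine ⟨φ s, Set.mem_image_of_mem φ hs, ?_⟩
    have h1 : X.dist x (φ s) ≤ L * Γ.dist (ψ x) (ψ (φ s)) + L := hψ.2.2.1 _ _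
    have h2 : Γ.dist (ψ x) (ψ (φ s)) ≤ Γ.dist (ψ x) s + Γ.dist s (ψ (φ s)) := hcΓ.dist_triangle
    have h3 : Γ.dist s (ψ (φ s)) ≤ L := hφ s
    have h4 : Γ.dist (ψ x) (ψ (φ s)) ≤ C8 + L := by omega
    have h5 : L * Γ.dist (ψ x) (ψ (φ s)) ≤ L * (C8 + L) := Nat.mul_le_mul_left L h4
    rw [hτ]; omega
  -- the jump relation
  set R : V → V → Prop := fun t t' => t ∈ Tst ∧ t' ∈ Tst ∧
    (X.dist t t' ≤ D₁ ∨ ∃ x y : V, x ∉ c₀ ∧ y ∉ c₀ ∧ ReachOut X c₀ x y ∧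
      X.dist x t ≤ D₁ ∧ X.dist y t' ≤ D₁) with hR
  -- invariant for the chain walk
  set Inv : V → V → Prop := fun p t =>
    (p ∈ c₀ ∧ X.dist p t ≤ τ) ∨
    (p ∉ c₀ ∧ ∃ x, x ∉ c₀ ∧ ReachOut X c₀ x p ∧ X.dist x t ≤ τ + 1) with hInv
  have hchain : ∀ {p q : V} (w : X.Walk p q),
      (∀ x ∈ w.support, ∃ z : W, z ∉ b ∧ Γ.dist (ψ x) z ≤ r) →
      ∀ t, t ∈ Tst → Inv p t →
      ∃ t' ∈ Tst, Relation.ReflTransGen R t t' ∧ Inv q t' := by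
    intro p q w
    induction w with
    | nil =>
        intro _ t ht hi
        exact ⟨t, ht, Relation.ReflTransGen.refl, hi⟩
    | @cons p p'' q hadj w' ih =>
        intro hgood t ht hi
        have hgood' : ∀ x ∈ w'.support, ∃ z : W, z ∉ b ∧ Γ.dist (ψ x) z ≤ r := by
          intro x hx
          exact hgood x (by rw [SimpleGraph.Walk.support_cons]; exact List.mem_cons_of_mem _ hx)
        have hp''mem : p'' ∈ (SimpleGraph.Walk.cons hadj w').support := by
          rw [SimpleGraph.Walk.support_cons]
          exact List.mem_cons_of_mem _ w'.start_mem_support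
        have hp''good : ∃ z : W, z ∉ b ∧ Γ.dist (ψ p'') z ≤ r := hgood p'' hp''mem
        have hdpp : X.dist p p'' ≤ 1 :=
          SimpleGraph.dist_le (SimpleGraph.Walk.cons hadj SimpleGraph.Walk.nil)
        by_cases hp'' : p'' ∈ c₀
        · obtain ⟨t'', ht'', hdt''⟩ := hdip p'' hp'' hp''good
          have hnext : Relation.ReflTransGen R t t'' := by
            rcases hi with ⟨hpc, hpd⟩ | ⟨hpc, x, hxn, hxr, hxd⟩
            · refine Relation.ReflTransGen.single ⟨ht, ht'', Or.inl ?_⟩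
              have h1 : X.dist t t'' ≤ X.dist t p + (X.dist p p'' + X.dist p'' t'') :=
                (hcX.dist_triangle).trans (Nat.add_le_add_left hcX.dist_triangle _)
              have h2 : X.dist t p = X.dist p t := SimpleGraph.dist_comm
              rw [hD₁]; omega
            · refine Relation.ReflTransGen.single ⟨ht, ht'', Or.inr ⟨x, p, hxn, hpc, hxr, ?_, ?_⟩⟩
              · rw [hD₁]; omega
              · have h1 : X.dist p t'' ≤ X.dist p p'' + X.dist p'' t'' := hcX.dist_triangle
                rw [hD₁]; omega
          have hi'' : Inv p'' t'' := Or.inl ⟨hp'', hdt''⟩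
          obtain ⟨t', ht', hrt, hinv⟩ := ih hgood' t'' ht'' hi''
          exact ⟨t', ht', hnext.trans hrt, hinv⟩
        · have hi'' : Inv p'' t := by
            rcases hi with ⟨hpc, hpd⟩ | ⟨hpc, x, hxn, hxr, hxd⟩
            · refine Or.inr ⟨hp'', p'', hp'', reachout_refl hp'', ?_⟩
              have h1 : X.dist p'' t ≤ X.dist p'' p + X.dist p t := hcX.dist_triangle
              have h2 : X.dist p'' p = X.dist p p'' := SimpleGraph.dist_comm
              omega
            · exact Or.inr ⟨hp'', x, hxn, reachout_trans hxr (reachout_adj hadj hpc hp''), hxd⟩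
          obtain ⟨t', ht', hrt, hinv⟩ := ih hgood' t ht hi''
          exact ⟨t', ht', hrt, hinv⟩
  -- build the chain walk from u₂ to v₂ through the complement
  have hu₂c : u₂ ∈ (bᶜ : Set W) := hu₂
  have hv₂c : v₂ ∈ (bᶜ : Set W) := hv₂
  obtain ⟨wi⟩ := hbt.2.preconnected ⟨u₂, hu₂c⟩ ⟨v₂, hv₂c⟩
  obtain ⟨wc0, hwc0⟩ := walk_of_induce wi
  have wc : Γ.Walk u₂ v₂ := wc0.copy rfl rfl
  have hwcpair : ∃ wc : Γ.Walk u₂ v₂, ∀ z ∈ wc.support, z ∈ (bᶜ : Set W) := by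
    refine ⟨wc0.copy rfl rfl, ?_⟩
    intro z hz
    rw [SimpleGraph.Walk.support_copy] at hz
    exact hwc0 z hz
  obtain ⟨wc, hwc⟩ := hwcpair
  obtain ⟨Q, hQ⟩ := hfill wc hwc
  have hQgood : ∀ x ∈ Q.support, ∃ z : W, z ∉ b ∧ Γ.dist (ψ x) z ≤ r := by
    intro x hx
    obtain ⟨z, hz, hd⟩ := hQ x hx
    exact ⟨z, hz, hd⟩
  -- start invariant
  have htu : φ u ∈ Tst := Set.mem_image_of_mem φ hu
  have htv : φ v ∈ Tst := Set.mem_image_of_mem φ hv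
  have hds : X.dist (φ u₂) (φ u) ≤ SB := by
    refine hstep u₂ u ?_
    rw [SimpleGraph.dist_comm]; exact hdu₂
  have hτSB : SB ≤ τ := by rw [hτ]; omega
  have hstart : Inv (φ u₂) (φ u) := by
    by_cases h : φ u₂ ∈ c₀
    · exact Or.inl ⟨h, hds.trans hτSB⟩
    · exact Or.inr ⟨h, φ u₂, h, reachout_refl h, by omega⟩
  obtain ⟨tend, htend, hrt, hinvend⟩ := hchain Q hQgood (φ u) htu hstart
  -- last step to φ v
  have hde : X.dist (φ v₂) (φ v) ≤ SB := by
    refine hstep v₂ v ?_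
    rw [SimpleGraph.dist_comm]; exact hdv₂
  have hlaststep : R tend (φ v) := by
    rcases hinvend with ⟨hqc, hqd⟩ | ⟨hqc, x, hxn, hxr, hxd⟩
    · refine ⟨htend, htv, Or.inl ?_⟩
      have h1 : X.dist tend (φ v) ≤ X.dist tend (φ v₂) + X.dist (φ v₂) (φ v) := hcX.dist_triangle
      have h2 : X.dist tend (φ v₂) = X.dist (φ v₂) tend := SimpleGraph.dist_comm
      rw [hD₁]; omega
    · refine ⟨htend, htv, Or.inr ⟨x, φ v₂, hxn, hqc, hxr, ?_, ?_⟩⟩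
      · rw [hD₁]; omega
      · rw [hD₁]; omega
  have htrans : Relation.ReflTransGen R (φ u) (φ v) := hrt.tail hlaststep
  -- the maximal jump
  have hRT : ∀ t t', R t t' → t ∈ Tst ∧ t' ∈ Tst := fun t t' h => ⟨h.1, h.2.1⟩
  by_cases hRem : ∀ t t' : V, ¬ R t t'
  · -- no jumps at all : φ u = φ v
    left
    have huv : φ u = φ v := by
      rcases (Relation.ReflTransGen.cases_head htrans) with h | ⟨x, hx, _⟩
      · exact h
      · exact absurd hx (hRem _ _)
    have h1 : Γ.dist u v ≤ L * X.dist (φ u) (φ v) + 3 * L := phi_lower hcΓ hψ hφ u v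
    rw [huv, SimpleGraph.dist_self] at h1
    simp only [Nat.mul_zero, Nat.zero_add] at h1
    rw [hB]
    omega
  · push_neg at hRem
    obtain ⟨ta, tb, hab⟩ := hRem
    set P : Set ℕ := (fun pr : V × V => X.dist pr.1 pr.2) '' {pr : V × V | R pr.1 pr.2} with hP
    have hPfin : P.Finite := by
      refine Set.Finite.image _ (Set.Finite.subset (hTstfin.prod hTstfin) ?_)
      rintro ⟨t, t'⟩ h
      exact Set.mk_mem_prod (hRT t t' h).1 (hRT t t' h).2
    have hPne : P.Nonempty := ⟨X.dist ta tb, ⟨(ta, tb), hab, rfl⟩⟩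
    set M : ℕ := sSup P with hM
    have hMmem : M ∈ P := Nat.sSup_mem hPne hPfin.bddAbove
    obtain ⟨⟨t1, t2⟩, ht12x, hMt⟩ := hMmem
    have ht12 : R t1 t2 := ht12x
    have hMle : ∀ t t', R t t' → X.dist t t' ≤ M := by
      intro t t' h
      exact le_csSup hPfin.bddAbove ⟨(t, t'), h, rfl⟩
    have hDint : X.dist (φ u) (φ v) ≤ (Tst.ncard + 1) * M :=
      reltrans_dist_le hcX hTstfin hRT hMle htrans
    have hlower : Γ.dist u v ≤ L * X.dist (φ u) (φ v) + 3 * L := phi_lower hcΓ hψ hφ u v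
    rcases ht12.2.2 with hsmall | ⟨xh, yh, hxhn, hyhn, hxyr, hxd, hyd⟩
    · -- the maximal jump is small : total distance is bounded
      left
      have h1 : (Tst.ncard + 1) * M ≤ (n * 2 + 1) * D₁ := by
        have hMt' : X.dist t1 t2 = M := hMt
        have hsmall' : M ≤ D₁ := by omega
        exact Nat.mul_le_mul (by omega) hsmall'
      have h2 : L * X.dist (φ u) (φ v) ≤ L * ((n * 2 + 1) * D₁) :=
        Nat.mul_le_mul_left L (hDint.trans h1)
      have h3 : L * ((n * 2 + 1) * D₁) = A * D₁ := by rw [hA]; ring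
      rw [hB]
      omega
    · -- large jump : build the tight cut in X
      right
      set K : Set V := {z | ReachOut X c₀ xh z} with hK
      set c : Set V := Kᶜ with hc
      have hxhK : xh ∈ K := reachout_refl hxhn
      have hyhK : yh ∈ K := hxyr
      have hKc₀ : ∀ z ∈ K, z ∉ c₀ := fun z hz => reachout_not_mem hz
      have hc₀c : c₀ ⊆ c := fun z hz hzK => hKc₀ z hzK hz
      -- walks within c₀
      have hwalkc₀ : ∀ z ∈ c₀, ∃ w : X.Walk z x₀, ∀ y ∈ w.support, y ∈ c₀ := by
        intro z hz
        obtain ⟨w, hw⟩ := hz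
        refine ⟨w.reverse, ?_⟩
        intro y hy
        rw [SimpleGraph.Walk.support_reverse, List.mem_reverse] at hy
        exact reachout_support hw y hy
      -- induce c connected
      have hccon : (X.induce c).Connected := by
        refine induce_connected (hc₀c hx₀c₀) ?_
        intro z hzc
        by_cases hz : z ∈ c₀
        · obtain ⟨w, hw⟩ := hwalkc₀ z hz
          exact ⟨w, fun y hy => hc₀c (hw y hy)⟩
        · obtain ⟨w0⟩ := hcX.preconnected z x₀
          obtain ⟨w', hw'⟩ := comp_filter_walk hx₀c₀ hwalkc₀ w0 hzc
          exact ⟨w', hw'⟩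
      -- induce cᶜ connected
      have hcccon : (X.induce (cᶜ : Set V)).Connected := by
        have hceq : (cᶜ : Set V) = K := by rw [hc, compl_compl]
        rw [hceq]
        refine induce_connected hxhK ?_
        intro z hz
        obtain ⟨w, hw⟩ := hz
        refine ⟨w.reverse, ?_⟩
        intro y hy
        rw [SimpleGraph.Walk.support_reverse, List.mem_reverse] at hy
        exact reachout_support hw y hy
      -- coboundary of c is inside coboundary of a
      have hcobsub : cob X c ⊆ cob X a := by
        rintro e ⟨x, y, rfl, hadj, hxc, hyc⟩
        have hyK : y ∈ K := by simpa [hc] using hyc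
        have hxc₀ : x ∈ c₀ := by
          by_contra hxn
          exact hxc (reachout_trans hyK (reachout_adj hadj.symm (hKc₀ y hyK) hxn))
        have hyna : y ∉ a := by
          intro hya
          exact hKc₀ y hyK (reachout_trans hxc₀ (reachout_adj hadj
            (by simpa using (hc₀a hxc₀)) (by simpa using hya)))
        exact ⟨x, y, rfl, hadj, hc₀a hxc₀, hyna⟩
      -- counting the coboundary of a
      have hcoba : (cob X a).Finite ∧ (cob X a).ncard ≤ nT * nT := by
        have hsub : cob X a ⊆ ⋃ x' ∈ T, (fun y' => s(x', y')) '' T := by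
          rintro e ⟨x, y, rfl, hadj, hxa, hya⟩
          obtain ⟨hxT, hyT⟩ := hend x y hadj hxa hya
          exact Set.mem_biUnion hxT ⟨y, hyT, rfl⟩
        have hper : ∀ x' ∈ T, ((fun y' => s(x', y')) '' T).Finite ∧
            ((fun y' => s(x', y')) '' T).ncard ≤ nT := by
          intro x' _
          exact ⟨hTbound.1.image _, (Set.ncard_image_le hTbound.1).trans hTbound.2⟩
        obtain ⟨h1, h2⟩ := ncard_biUnion_le hTbound.1 _ nT hper
        refine ⟨h1.subset hsub, ?_⟩
        exact (Set.ncard_le_ncard hsub h1).trans (h2.trans (Nat.mul_le_mul_right _ hTbound.2))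
      have hcobc_fin : (cob X c).Finite := hcoba.1.subset hcobsub
      have hcobc_card : (cob X c).ncard < nT * nT + 1 := by
        have := (Set.ncard_le_ncard hcobsub hcoba.1).trans hcoba.2
        omega
      -- produce the two far-apart coboundary vertices
      have hverts : ∀ t ∈ Tst, ∀ k : V, k ∈ K → X.dist k t ≤ D₁ →
          ∃ y' ∈ cobVerts X c, X.dist t y' ≤ D₂ := by
        intro t htm k hkK hkd
        obtain ⟨s, hs, rfl⟩ := htm
        obtain ⟨s₁, s₂, hs₁, hs₂, hsadj, hds₁, hds₂⟩ := hextract s hs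
        have hps : φ s₁ ∈ c₀ := hφbc₀ s₁ hs₁
        have hdps : X.dist (φ s₁) (φ s) ≤ SB := by
          refine hstep s₁ s ?_
          rw [SimpleGraph.dist_comm]; exact hds₁
        obtain ⟨g, hg⟩ := hcX.exists_walk_length_eq_dist k (φ s₁)
        have hpsK : φ s₁ ∉ K := fun h => hKc₀ _ h hps
        obtain ⟨x1, y1, hadj1, hx1K, hy1K, hx1s, hy1s⟩ := exists_cross g hkK hpsK
        have hy1c : y1 ∈ c := hy1K
        have hx1c : x1 ∉ c := fun h => h hx1K
        refine ⟨y1, ⟨x1, y1, x1, rfl, hadj1.symm, hy1c, hx1c⟩, ?_⟩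
        have hd1 : X.dist k y1 ≤ g.length := dist_le_of_mem_support g hy1s
        rw [hg] at hd1
        have hd2 : X.dist k (φ s₁) ≤ X.dist k (φ s) + X.dist (φ s) (φ s₁) := hcX.dist_triangle
        have hd3 : X.dist (φ s) (φ s₁) = X.dist (φ s₁) (φ s) := SimpleGraph.dist_comm
        have hd4 : X.dist (φ s) y1 ≤ X.dist (φ s) k + X.dist k y1 := hcX.dist_triangle
        have hd5 : X.dist (φ s) k = X.dist k (φ s) := SimpleGraph.dist_comm
        rw [hD₂]
        omega
      obtain ⟨y1, hy1m, hy1d⟩ := hverts t1 ht12.1 xh hxhK hxd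
      obtain ⟨y2, hy2m, hy2d⟩ := hverts t2 ht12.2.1 yh hyhK hyd
      -- assemble
      refine ⟨c, ⟨hccon, hcccon⟩, hcobc_fin, hcobc_card, y1, hy1m, y2, hy2m, ?_⟩
      have hd6 : X.dist t1 t2 ≤ X.dist t1 y1 + (X.dist y1 y2 + X.dist y2 t2) :=
        (hcX.dist_triangle).trans (Nat.add_le_add_left hcX.dist_triangle _)
      have hd7 : X.dist y2 t2 = X.dist t2 y2 := SimpleGraph.dist_comm
      have hd8 : X.dist t1 t2 ≤ X.dist y1 y2 + 2 * D₂ := by omega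
      have h1 : X.dist (φ u) (φ v) ≤ (n * 2 + 1) * (X.dist y1 y2 + 2 * D₂) := by
        refine hDint.trans ?_
        have hMt' : X.dist t1 t2 = M := hMt
        rw [← hMt']
        exact Nat.mul_le_mul (by omega) hd8
      have h2 : L * X.dist (φ u) (φ v) ≤ L * ((n * 2 + 1) * (X.dist y1 y2 + 2 * D₂)) :=
        Nat.mul_le_mul_left L h1
      have h3 : L * ((n * 2 + 1) * (X.dist y1 y2 + 2 * D₂)) =
          A * X.dist y1 y2 + A * (2 * D₂) := by rw [hA]; ring
      have h4 : A * X.dist y1 y2 + A * (2 * D₂) ≤ A * X.dist y1 y2 + B := by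
        rw [hB]; omega
      omega

end Stmt9Aux

open Paper in
theorem stmt9 {V W : Type*} (X : SimpleGraph V) (Γ : SimpleGraph W)
    (hcX : X.Connected) (hcΓ : Γ.Connected)
    (hbX : BddVal X) (hbΓ : BddVal Γ)
    (hqt : QuasiTransitive X)
    (hqi : ∃ (l e : ℝ) (ψ : V → W), 1 ≤ l ∧ 0 ≤ e ∧ IsQI X Γ l e ψ) :
    ∀ n : ℕ, 0 < n → ∃ m : ℕ, 0 < m ∧
      ∀ b : Set W, MemBX Γ b → Tight Γ b → (cob Γ b).ncard < n →
        ∀ v ∈ cobVerts Γ b, ∀ w ∈ cobVerts Γ b, Γ.dist v w < m := by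
  classical
  intro n hn
  obtain ⟨dX, hdegX⟩ := hbX
  obtain ⟨l, e, ψ, hl, he, hqi'⟩ := hqi
  obtain ⟨L, hψ⟩ := Stmt9Aux.nqi_of_isqi hl he hqi'
  obtain ⟨n', A, B, hpart1⟩ := Stmt9Aux.part1 hcX hcΓ hdegX hψ n
  have hloc : ∀ v : V, (X.neighborSet v).Finite := fun v => (hdegX v).1
  obtain ⟨M, hpart2⟩ := Stmt9Aux.part2 hqt hloc n'
  refine ⟨A * M + B + 1, by omega, ?_⟩
  intro b hmem htight hcard u hu v hv
  rcases hpart1 b htight hmem hcard u hu v hv with hsmall |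
    ⟨c, hct, hcf, hcc, x', hx', y', hy', hineq⟩
  · omega
  · have hdxy := hpart2 c hct hcf hcc x' hx' y' hy'
    have hmul : A * X.dist x' y' ≤ A * M := Nat.mul_le_mul_left A hdxy
    omega
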